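/- Every colored graph is 2-connected: removing any single vertex leaves the graph connected. -/

import Mathlib

/-- A `(D+1)`-colored graph: a finite vertex set with a black/white 2-coloring
and, for each color `c ∈ {0,…,D}`, a perfect matching `σ c` (a fixed-point-free
involution matching black vertices to white ones), the whole graph being connected.
Each vertex is incident to exactly one edge of each color. -/
structure ColoredGraph (D : ℕ) where
  V : Type
  [fintypeV : Fintype V]
  isBlack : V → Bool
  σ : Fin (D + 1) → V → V
  invol : ∀ c v, σ c (σ c v) = v
  bipartite : ∀ c v, isBlack (σ c v) = !isBlack v
  conn : ∀ u v : V, Relation.ReflTransGen (fun a b => ∃ c, σ c a = b) u v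

attribute [instance] ColoredGraph.fintypeV


/-- Colored graphs are 2-connected: removing any single vertex `x` leaves the graph
connected, i.e. any two vertices `u, v ≠ x` are joined by a walk avoiding `x`. -/
theorem colored_graph_two_connected (D : ℕ) (hD : 3 ≤ D) (G : ColoredGraph D)
    (x u v : G.V) (hu : u ≠ x) (hv : v ≠ x) :
    Relation.ReflTransGen (fun a b => a ≠ x ∧ b ≠ x ∧ ∃ c, G.σ c a = b) u v := by
  classical
  set R : G.V → G.V → Prop := fun a b => a ≠ x ∧ b ≠ x ∧ ∃ c, G.σ c a = b with hR
  have hinj : ∀ c : Fin (D + 1), Function.Injective (G.σ c) := by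
    intro c
    exact (Function.Involutive.injective (G.invol c))
  -- key lemma: any two neighbors of x are connected avoiding x
  have key : ∀ c c' : Fin (D + 1),
      Relation.ReflTransGen R (G.σ c x) (G.σ c' x) := by
    intro c c'
    set a := G.σ c x with ha
    set b := G.σ c' x with hb
    set g : G.V → G.V := fun w => G.σ c (G.σ c' w) with hg
    have hginj : Function.Injective g := (hinj c).comp (hinj c')
    have hga : ∀ j, G.isBlack (g^[j] a) = !G.isBlack x := by
      intro j
      induction j with
      | zero => simpa [ha] using G.bipartite c x
      | succ n ih =>
        rw [Function.iterate_succ_apply']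
        show G.isBlack (G.σ c (G.σ c' (g^[n] a))) = _
        simp [G.bipartite, ih]
    have hgx : ∀ j, g^[j] a ≠ x := by
      intro j h
      have := hga j
      rw [h] at this
      simp at this
    have hgb : g b = a := by simp [hg, hb, ha, G.invol]
    have hex : ∃ n, g^[n] a = b := by
      obtain ⟨i, j, hij, hEq⟩ := Finite.exists_ne_map_eq_of_infinite
        (fun n : ℕ => g^[n] a)
      have step : ∀ i j : ℕ, i < j → g^[i] a = g^[j] a → ∃ n, g^[n] a = b := by
        intro i j h hEq
        have hc0 : g^[i] (g^[j - i] a) = g^[i] a := by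
          rw [← Function.iterate_add_apply, Nat.add_sub_cancel' h.le]
          exact hEq.symm
        have hcyc : g^[j - i] a = a := hginj.iterate i hc0
        refine ⟨j - i - 1, hginj ?_⟩
        rw [hgb]
        have h1 : j - i = j - i - 1 + 1 := by omega
        rw [h1, Function.iterate_succ_apply'] at hcyc
        exact hcyc
      rcases Nat.lt_or_ge i j with h | h
      · exact step i j h hEq
      · exact step j i (lt_of_le_of_ne h (Ne.symm hij)) hEq.symm
    set k := Nat.find hex with hk
    have hkb : g^[k] a = b := Nat.find_spec hex
    have hmin : ∀ j < k, g^[j] a ≠ b := fun j hj => Nat.find_min hex hj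
    have path : ∀ j ≤ k, Relation.ReflTransGen R a (g^[j] a) := by
      intro j hj
      induction j with
      | zero => exact Relation.ReflTransGen.refl
      | succ n ih =>
        have hn : n ≤ k := Nat.le_of_succ_le hj
        have hnk : n < k := hj
        have p := ih hn
        have h1 : R (g^[n] a) (G.σ c' (g^[n] a)) := by
          refine ⟨hgx n, ?_, c', rfl⟩
          intro h
          apply hmin n hnk
          have := congrArg (G.σ c') h
          rwa [G.invol] at this
        have h2 : R (G.σ c' (g^[n] a)) (g^[n + 1] a) := by
          refine ⟨h1.2.1, hgx (n + 1), c, ?_⟩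
          rw [Function.iterate_succ_apply']
        exact (p.tail h1).tail h2
    have := path k le_rfl
    rwa [hkb] at this
  have hfix : ∀ (c : Fin (D + 1)) (w : G.V), G.σ c w ≠ w := by
    intro c w h
    have := G.bipartite c w
    rw [h] at this
    simp at this
  have main : ∀ z, Relation.ReflTransGen (fun a b => ∃ c, G.σ c a = b) u z →
      (z ≠ x → Relation.ReflTransGen R u z) ∧
      (z = x → ∀ c, Relation.ReflTransGen R u (G.σ c x)) := by
    intro z hz
    induction hz with
    | refl => exact ⟨fun _ => Relation.ReflTransGen.refl, fun h => absurd h hu⟩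
    | @tail p q hp hstep ih =>
      obtain ⟨c, hc⟩ := hstep
      by_cases hpx : p = x
      · subst hpx
        constructor
        · intro _; rw [← hc]; exact ih.2 rfl c
        · intro hqx
          exact absurd (hqx ▸ hc) (hfix c p)
      · have pw := ih.1 hpx
        constructor
        · intro hqx
          exact pw.tail ⟨hpx, hqx, c, hc⟩
        · intro hqx
          subst hqx
          intro c'
          have hp' : p = G.σ c q := by rw [← hc, G.invol]
          rw [hp'] at pw
          exact pw.trans (key c c')
  exact (main v (G.conn u v)).1 hv
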